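/- Let k ≥ 0 and n ≥ 1 be integers and let α be an integer with α^n ≡ 1 (mod n). Then Σ_{i=0}^{n-1} i^(k̲) · α^(i-k) ≡ 0 (mod n) (where, since i^(k̲) = 0 for i < k, the sum is the integer Σ_{i=k}^{n-1} i^(k̲) α^(i-k)) if and only if at least one of the following holds: (a) k+1 is neither 4 nor a prime; (b) k+1 = 4 and 4 ∤ n; (c) k+1 is a prime q, and either q ∤ n or α ≢ 1 (mod q). -/

import Mathlib

open Finset

lemma L1 (n k : ℕ) (x : ℤ) :
    ∑ m ∈ Finset.range (n+1), ((n.choose m * m.choose k : ℕ) : ℤ) * x ^ (m - k)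
      = (n.choose k : ℤ) * (x + 1) ^ (n - k) := by
  rcases lt_or_ge n k with h | h
  · rw [Nat.choose_eq_zero_of_lt h, Finset.sum_eq_zero]
    · simp
    · intro m hm
      have hm' : m < k := by have := Finset.mem_range.mp hm; omega
      rw [Nat.choose_eq_zero_of_lt hm']
      simp
  · rw [Finset.range_eq_Ico, ← Finset.sum_Ico_consecutive _ (Nat.zero_le k) (by omega : k ≤ n+1)]
    have h1 : ∑ m ∈ Finset.Ico 0 k, ((n.choose m * m.choose k : ℕ) : ℤ) * x ^ (m - k) = 0 := by
      apply Finset.sum_eq_zero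
      intro m hm
      have hm' : m < k := (Finset.mem_Ico.mp hm).2
      rw [Nat.choose_eq_zero_of_lt hm']
      simp
    rw [h1, zero_add, Finset.sum_Ico_eq_sum_range]
    have h2 : ∀ j ∈ Finset.range (n + 1 - k),
        ((n.choose (k+j) * (k+j).choose k : ℕ) : ℤ) * x ^ (k + j - k)
          = (n.choose k : ℤ) * (((n-k).choose j : ℤ) * x ^ j) := by
      intro j hj
      have hj' : j < n + 1 - k := Finset.mem_range.mp hj
      have : n.choose (k+j) * (k+j).choose k = n.choose k * (n-k).choose j := by
        have := Nat.choose_mul (n := n) (k := k + j) (s := k) (by omega)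
        simpa using this
      rw [show k + j - k = j by omega, this]
      push_cast
      ring
    rw [Finset.sum_congr rfl h2, ← Finset.mul_sum]
    congr 1
    have hnk : n + 1 - k = (n - k) + 1 := by omega
    rw [hnk, add_pow]
    simp [mul_comm]

lemma L2 (n k : ℕ) (α : ℤ) :
    ∑ i ∈ Finset.range n, (i.descFactorial k : ℤ) * α ^ (i - k)
      = ∑ m ∈ Finset.range n, ((k.factorial * m.choose k * n.choose (m+1) : ℕ) : ℤ) * (α - 1) ^ (m - k) := by
  induction n with
  | zero => simp
  | succ n ih =>
    rw [Finset.sum_range_succ, ih]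
    have hsplit : ∀ m ∈ Finset.range (n+1),
        ((k.factorial * m.choose k * (n+1).choose (m+1) : ℕ) : ℤ) * (α - 1) ^ (m - k)
          = ((k.factorial * m.choose k * n.choose (m+1) : ℕ) : ℤ) * (α - 1) ^ (m - k)
            + ((k.factorial : ℤ)) * (((n.choose m * m.choose k : ℕ) : ℤ) * (α - 1) ^ (m - k)) := by
      intro m hm
      rw [Nat.choose_succ_succ]
      push_cast
      ring
    rw [Finset.sum_congr rfl hsplit, Finset.sum_add_distrib, ← Finset.mul_sum, L1]
    have hlast : ∑ m ∈ Finset.range (n+1), ((k.factorial * m.choose k * n.choose (m+1) : ℕ) : ℤ) * (α - 1) ^ (m - k)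
        = (∑ m ∈ Finset.range n, ((k.factorial * m.choose k * n.choose (m+1) : ℕ) : ℤ) * (α - 1) ^ (m - k))
          + ((k.factorial * n.choose k * n.choose (n+1) : ℕ) : ℤ) * (α - 1) ^ (n - k) := by
      rw [Finset.sum_range_succ]
    rw [hlast, Nat.choose_succ_self, Nat.mul_zero, Nat.cast_zero, zero_mul, add_zero]
    rw [sub_add_cancel]
    congr 1
    rw [Nat.descFactorial_eq_factorial_mul_choose]
    push_cast
    ring

lemma F1 (p : ℕ) (hp : p.Prime) : ∀ j : ℕ, 0 < j → padicValNat p (j.factorial) + 1 ≤ j := by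
  haveI : Fact p.Prime := ⟨hp⟩
  intro j
  induction j using Nat.strong_induction_on with
  | _ j ih =>
    intro hj
    have hdm : p * (j / p) + j % p = j := Nat.div_add_mod j p
    have hr : j % p < p := Nat.mod_lt _ hp.pos
    have h1 : padicValNat p (j.factorial) = padicValNat p ((p * (j / p)).factorial) := by
      conv_lhs => rw [← hdm]
      exact padicValNat_factorial_mul_add (j / p) hr
    rcases Nat.eq_zero_or_pos (j / p) with hm | hm
    · rw [h1, hm, Nat.mul_zero, Nat.factorial_zero, padicValNat.one]
      omega
    · have h2 : padicValNat p ((p * (j / p)).factorial)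
          = padicValNat p ((j / p).factorial) + j / p := padicValNat_factorial_mul _
      have hlt : j / p < j := Nat.div_lt_self hj hp.one_lt
      have := ih (j / p) hlt hm
      have hpm : 2 * (j / p) ≤ p * (j / p) := Nat.mul_le_mul_right _ hp.two_le
      omega

-- F2 : v_p(m+1) ≤ v_p(m!) + 1

lemma F2 (p m : ℕ) (hp : p.Prime) :
    padicValNat p (m + 1) ≤ padicValNat p (m.factorial) + 1 := by
  haveI : Fact p.Prime := ⟨hp⟩
  set a := padicValNat p (m + 1) with ha
  rcases Nat.eq_zero_or_pos a with h0 | h0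
  · omega
  rcases Nat.eq_zero_or_pos m with hm | hm
  · exfalso; rw [hm] at ha; simp [padicValNat.one] at ha; omega
  have hd : p ^ a ∣ m + 1 := pow_padicValNat_dvd
  have hle : p ^ a ≤ m + 1 := Nat.le_of_dvd (Nat.succ_pos m) hd
  have hpa : p ^ a = p ^ (a - 1) * p := by
    conv_lhs => rw [show a = (a - 1) + 1 by omega]
    rw [pow_succ]
  have h2 : 2 * p ^ (a - 1) ≤ p ^ a := by
    rw [hpa, mul_comm]
    exact Nat.mul_le_mul_left _ hp.two_le
  have hpos : 0 < p ^ (a - 1) := pow_pos hp.pos _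
  have hle2 : p ^ (a - 1) ≤ m := by omega
  have : p ^ (a - 1) ∣ m.factorial := Nat.dvd_factorial hpos hle2
  have := (padicValNat_dvd_iff_le m.factorial_ne_zero).mp this
  omega

lemma termdvd (p e n k m : ℕ) (hp : p.Prime) (hpe : p ^ e ∣ n) (hmn : m < n) (hkm : k < m)
    (α : ℤ) (hα : (p : ℤ) ∣ α - 1) :
    ((p : ℤ)) ^ e ∣ ((k.factorial * m.choose k * n.choose (m + 1) : ℕ) : ℤ) * (α - 1) ^ (m - k) := by
  haveI : Fact p.Prime := ⟨hp⟩
  set j := m - k with hj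
  have hj1 : 1 ≤ j := by omega
  have hpj : (p : ℤ) ^ j ∣ (α - 1) ^ j := pow_dvd_pow_of_dvd hα j
  rcases le_or_gt e j with h | h
  · exact Dvd.dvd.mul_left ((pow_dvd_pow _ h).trans hpj) _
  · -- j < e : need p^(e-j) ∣ N
    set N := k.factorial * m.choose k * n.choose (m + 1) with hN
    have hn0 : n ≠ 0 := by omega
    -- identity : (m+1) * j! * N = n.descFactorial (m+1)
    have hid : (m + 1) * j.factorial * N = n.descFactorial (m + 1) := by
      have h1 : k.factorial * m.choose k * j.factorial = m.factorial := by
        have := Nat.choose_mul_factorial_mul_factorial (le_of_lt hkm)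
        rw [← this]; ring
      have h2 : n.descFactorial (m + 1) = (m + 1).factorial * n.choose (m + 1) :=
        Nat.descFactorial_eq_factorial_mul_choose n (m + 1)
      rw [h2, Nat.factorial_succ]
      calc (m + 1) * j.factorial * N
          = (m + 1) * (k.factorial * m.choose k * j.factorial) * n.choose (m + 1) := by
            rw [hN]; ring
        _ = (m + 1) * m.factorial * n.choose (m + 1) := by rw [h1]
    -- descFactorial n (m+1) = n * descFactorial (n-1) m
    have hdesc : n.descFactorial (m + 1) = n * (n - 1).descFactorial m := by
      conv_lhs => rw [show n = (n - 1) + 1 by omega]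
      rw [Nat.succ_descFactorial_succ]
      rw [show n - 1 + 1 = n by omega]
    have hD0 : (n - 1).descFactorial m ≠ 0 := by
      intro h0
      rw [Nat.descFactorial_eq_zero_iff_lt] at h0
      omega
    have hN0 : N ≠ 0 := by
      have h1 : 0 < m.choose k := Nat.choose_pos (le_of_lt hkm)
      have h2 : 0 < n.choose (m + 1) := Nat.choose_pos (by omega)
      positivity
    -- valuations
    have hvn : e ≤ padicValNat p n := (padicValNat_dvd_iff_le hn0).mp hpe
    have hvD : padicValNat p m.factorial ≤ padicValNat p ((n - 1).descFactorial m) := by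
      apply (padicValNat_dvd_iff_le hD0).mp
      exact dvd_trans pow_padicValNat_dvd (Nat.factorial_dvd_descFactorial _ _)
    have hsum : padicValNat p (m + 1) + padicValNat p j.factorial + padicValNat p N
        = padicValNat p n + padicValNat p ((n - 1).descFactorial m) := by
      have lhs : padicValNat p ((m + 1) * j.factorial * N)
          = padicValNat p (m + 1) + padicValNat p j.factorial + padicValNat p N := by
        rw [padicValNat.mul (by positivity) hN0, padicValNat.mul (by positivity) j.factorial_ne_zero]
      have rhs : padicValNat p (n * (n - 1).descFactorial m)
          = padicValNat p n + padicValNat p ((n - 1).descFactorial m) := by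
        rw [padicValNat.mul hn0 hD0]
      rw [← lhs, ← rhs, hid, hdesc]
    have hF1 := F1 p hp j hj1
    have hF2 := F2 p m hp
    have hvN : e - j ≤ padicValNat p N := by omega
    have : p ^ (e - j) ∣ N := (padicValNat_dvd_iff_le hN0).mpr hvN
    have hcast : ((p : ℤ)) ^ (e - j) ∣ (N : ℤ) := by exact_mod_cast Int.natCast_dvd_natCast.mpr this
    calc ((p : ℤ)) ^ e = (p : ℤ) ^ (e - j) * (p : ℤ) ^ j := by
          rw [← pow_add]; congr 1; omega
      _ ∣ (N : ℤ) * (α - 1) ^ j := mul_dvd_mul hcast hpj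

lemma LA (p e n k : ℕ) (hp : p.Prime) (hpe : p ^ e ∣ n) (α : ℤ) (hα : (p : ℤ) ∣ α - 1) :
    ((p : ℤ)) ^ e ∣ (∑ i ∈ Finset.range n, (i.descFactorial k : ℤ) * α ^ (i - k))
      - ((k.factorial * n.choose (k + 1) : ℕ) : ℤ) := by
  rw [L2]
  rcases lt_or_ge k n with hkn | hkn
  · have hk : k ∈ Finset.range n := Finset.mem_range.mpr hkn
    have htk : ((k.factorial * k.choose k * n.choose (k+1) : ℕ) : ℤ) * (α - 1) ^ (k - k)
        = ((k.factorial * n.choose (k + 1) : ℕ) : ℤ) := by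
      rw [Nat.choose_self, Nat.sub_self]
      push_cast; ring
    rw [← Finset.sum_erase_add _ _ hk, htk, add_sub_cancel_right]
    apply Finset.dvd_sum
    intro m hm
    have hm' := Finset.mem_erase.mp hm
    have hmn : m < n := Finset.mem_range.mp hm'.2
    rcases lt_or_gt_of_ne hm'.1 with h | h
    · rw [Nat.choose_eq_zero_of_lt h]
      simp
    · exact termdvd p e n k m hp hpe hmn h α hα
  · have h1 : ∀ m ∈ Finset.range n,
        ((k.factorial * m.choose k * n.choose (m+1) : ℕ) : ℤ) * (α - 1) ^ (m - k) = 0 := by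
      intro m hm
      rw [Nat.choose_eq_zero_of_lt (by have := Finset.mem_range.mp hm; omega)]
      simp
    rw [Finset.sum_eq_zero h1, Nat.choose_eq_zero_of_lt (by omega)]
    simp

lemma RecS (n k : ℕ) (α : ℤ) :
    (α - 1) * (∑ i ∈ Finset.range n, (i.descFactorial (k+1) : ℤ) * α ^ (i - (k+1)))
      + ((k : ℤ) + 1) * (∑ i ∈ Finset.range n, (i.descFactorial k : ℤ) * α ^ (i - k))
      = (n.descFactorial (k+1) : ℤ) * α ^ (n - (k+1)) := by
  set f : ℕ → ℤ := fun i => (i.descFactorial (k+1) : ℤ) * α ^ (i - (k+1)) with hf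
  have key : ∀ i, (α - 1) * ((i.descFactorial (k+1) : ℤ) * α ^ (i - (k+1)))
      + ((k : ℤ) + 1) * ((i.descFactorial k : ℤ) * α ^ (i - k)) = f (i+1) - f i := by
    intro i
    have hfi : ∀ m : ℕ, f m = (m.descFactorial (k+1) : ℤ) * α ^ (m - (k+1)) := fun m => rfl
    rw [hfi, hfi]
    rcases lt_trichotomy i k with h | h | h
    · have h1 : i.descFactorial (k+1) = 0 := Nat.descFactorial_of_lt (by omega)
      have h2 : i.descFactorial k = 0 := Nat.descFactorial_of_lt h
      have h3 : (i+1).descFactorial (k+1) = 0 := Nat.descFactorial_of_lt (by omega)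
      rw [h1, h2, h3]
      push_cast
      ring
    · subst h
      have h1 : i.descFactorial (i+1) = 0 := Nat.descFactorial_of_lt (by omega)
      have h4 : (i+1).descFactorial (i+1) = (i+1) * i.factorial := by
        rw [Nat.succ_descFactorial_succ, Nat.descFactorial_self]
      have h5 : i - (i+1) = 0 := by omega
      have h6 : i - i = 0 := by omega
      have h7 : (i+1) - (i+1) = 0 := by omega
      rw [h1, h4, Nat.descFactorial_self, h5, h6, h7]
      push_cast
      ring
    · have hik : k ≤ i := le_of_lt h
      have h1 : i.descFactorial (k+1) = (i - k) * i.descFactorial k :=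
        Nat.descFactorial_succ i k
      have h3 : (i+1).descFactorial (k+1) = (i+1) * i.descFactorial k :=
        Nat.succ_descFactorial_succ i k
      have e1 : i - k = (i - (k+1)) + 1 := by omega
      have e2 : (i+1) - (k+1) = (i - (k+1)) + 1 := by omega
      rw [h1, h3, e2, e1]
      have hc : ((i - (k+1) : ℕ) : ℤ) = (i : ℤ) - k - 1 := by omega
      push_cast [hc]
      ring
  calc (α - 1) * (∑ i ∈ Finset.range n, (i.descFactorial (k+1) : ℤ) * α ^ (i - (k+1)))
      + ((k : ℤ) + 1) * (∑ i ∈ Finset.range n, (i.descFactorial k : ℤ) * α ^ (i - k))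
      = ∑ i ∈ Finset.range n, ((α - 1) * ((i.descFactorial (k+1) : ℤ) * α ^ (i - (k+1)))
          + ((k : ℤ) + 1) * ((i.descFactorial k : ℤ) * α ^ (i - k))) := by
        rw [Finset.sum_add_distrib, Finset.mul_sum, Finset.mul_sum]
    _ = ∑ i ∈ Finset.range n, (f (i+1) - f i) := by
        apply Finset.sum_congr rfl; intro i _; exact key i
    _ = f n - f 0 := Finset.sum_range_sub f n
    _ = (n.descFactorial (k+1) : ℤ) * α ^ (n - (k+1)) := by
        simp [hf]

lemma Rec0 (n : ℕ) (α : ℤ) :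
    (α - 1) * (∑ i ∈ Finset.range n, (i.descFactorial 0 : ℤ) * α ^ (i - 0)) = α ^ n - 1 := by
  simp only [Nat.descFactorial_zero, Nat.cast_one, one_mul, Nat.sub_zero]
  exact mul_geom_sum α n

lemma LB (p e n : ℕ) (hp : p.Prime) (hn : n ≠ 0) (hpe : p ^ e ∣ n) (α : ℤ)
    (hu : ¬ ((p : ℤ) ∣ α - 1)) (hα : ((p : ℤ)) ^ e ∣ α ^ n - 1) :
    ∀ k, ((p : ℤ)) ^ e ∣ ∑ i ∈ Finset.range n, (i.descFactorial k : ℤ) * α ^ (i - k) := by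
  have hco : IsCoprime ((p : ℤ) ^ e) (α - 1) :=
    ((Nat.prime_iff_prime_int.mp hp).coprime_iff_not_dvd.mpr hu).pow_left
  have hndvd : ((p : ℤ)) ^ e ∣ (n : ℤ) := by
    exact_mod_cast Int.natCast_dvd_natCast.mpr hpe
  intro k
  induction k with
  | zero =>
    apply hco.dvd_of_dvd_mul_left
    rw [Rec0]
    exact hα
  | succ k ih =>
    apply hco.dvd_of_dvd_mul_left
    have h1 : (α - 1) * (∑ i ∈ Finset.range n, (i.descFactorial (k+1) : ℤ) * α ^ (i - (k+1)))
        = (n.descFactorial (k+1) : ℤ) * α ^ (n - (k+1))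
          - ((k : ℤ) + 1) * (∑ i ∈ Finset.range n, (i.descFactorial k : ℤ) * α ^ (i - k)) := by
      rw [← RecS]; ring
    rw [h1]
    apply dvd_sub
    · apply Dvd.dvd.mul_right
      apply dvd_trans hndvd
      have : n.descFactorial (k+1) = n * (n-1).descFactorial k := by
        conv_lhs => rw [show n = (n - 1) + 1 by omega]
        rw [Nat.succ_descFactorial_succ, show n - 1 + 1 = n by omega]
      rw [this]
      push_cast
      exact Dvd.intro _ rfl
    · exact Dvd.dvd.mul_left ih _

-- CRT-style decomposition

lemma dvd_iff_forall_prime_pow (n : ℕ) (hn : n ≠ 0) (S : ℤ) :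
    (n : ℤ) ∣ S ↔ ∀ p ∈ n.primeFactors, ((p : ℤ)) ^ (n.factorization p) ∣ S := by
  constructor
  · intro h p hp
    refine dvd_trans ?_ h
    exact_mod_cast Int.natCast_dvd_natCast.mpr (Nat.ordProj_dvd n p)
  · intro h
    rw [Int.natCast_dvd]
    rw [Nat.dvd_iff_prime_pow_dvd_dvd]
    intro p k hp hpk
    rcases Nat.eq_zero_or_pos k with rfl | hk
    · simp
    have hpn : p ∣ n := dvd_trans (dvd_pow_self p (by omega)) hpk
    have hpmem : p ∈ n.primeFactors := Nat.mem_primeFactors.mpr ⟨hp, hpn, hn⟩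
    have hk' : k ≤ n.factorization p :=
      (Nat.Prime.pow_dvd_iff_le_factorization hp hn).mp hpk
    have := h p hpmem
    have h2 : ((p : ℤ)) ^ k ∣ S := dvd_trans (pow_dvd_pow _ hk') this
    exact Int.natCast_dvd.mp (by exact_mod_cast h2)

lemma hId (n k : ℕ) (hn : 1 ≤ n) :
    (k+1) * (k.factorial * n.choose (k+1)) = n * ((n-1).descFactorial k) := by
  have h1 : (k+1) * (k.factorial * n.choose (k+1)) = (k+1).factorial * n.choose (k+1) := by
    rw [Nat.factorial_succ]; ring
  rw [h1, ← Nat.descFactorial_eq_factorial_mul_choose]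
  conv_lhs => rw [show n = (n-1)+1 by omega]
  rw [Nat.succ_descFactorial_succ, show n-1+1 = n by omega]

lemma LC (p e n k : ℕ) (hp : p.Prime) (hkn : k < n) (hpe : p ^ e ∣ n)
    (hv : padicValNat p (k+1) ≤ padicValNat p ((n-1).descFactorial k)) :
    p ^ e ∣ k.factorial * n.choose (k+1) := by
  haveI : Fact p.Prime := ⟨hp⟩
  have hn : 1 ≤ n := by omega
  set X := k.factorial * n.choose (k+1) with hX
  set D := (n-1).descFactorial k with hDdef
  have hX0 : X ≠ 0 := by
    have := Nat.choose_pos (show k+1 ≤ n by omega)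
    have := k.factorial_pos
    positivity
  have hD0 : D ≠ 0 := by
    rw [hDdef, Ne, Nat.descFactorial_eq_zero_iff_lt]
    omega
  have hn0 : n ≠ 0 := by omega
  have hid := hId n k hn
  have hveq : padicValNat p (k+1) + padicValNat p X = padicValNat p n + padicValNat p D := by
    rw [← padicValNat.mul (by omega) hX0, ← padicValNat.mul hn0 hD0, hid]
  have hvn : e ≤ padicValNat p n := (padicValNat_dvd_iff_le hn0).mp hpe
  exact (padicValNat_dvd_iff_le hX0).mpr (by omega)

lemma helperF (k x y : ℕ) (hx : 1 ≤ x) (hxy : x < y) (hyk : y ≤ k) :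
    x * y ∣ k.factorial := by
  have h1 : x ∣ (y-1).factorial := Nat.dvd_factorial hx (by omega)
  obtain ⟨d, hd⟩ := h1
  have hyfac : y.factorial = y * (y-1).factorial := by
    conv_lhs => rw [show y = (y-1)+1 by omega]
    rw [Nat.factorial_succ, show y-1+1 = y by omega]
  have h2 : x * y ∣ y.factorial := ⟨d, by rw [hyfac, hd]; ring⟩
  exact dvd_trans h2 (Nat.factorial_dvd_factorial hyk)

lemma compdvd (k : ℕ) (h4 : k + 1 ≠ 4) (hnp : ¬ (k+1).Prime) : (k+1) ∣ k.factorial := by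
  rcases Nat.eq_zero_or_pos k with rfl | hk
  · simp
  obtain ⟨b, hb, hb2, hblt⟩ := Nat.exists_dvd_of_not_prime2 (by omega) hnp
  obtain ⟨c, hc⟩ := hb
  have hc2 : 2 ≤ c := by
    rcases c with _ | _ | c
    · omega
    · omega
    · omega
  have hclt : c < k + 1 := by
    have h2 : 2 * c ≤ b * c := Nat.mul_le_mul_right c hb2
    omega
  rcases lt_trichotomy b c with h | h | h
  · exact hc ▸ helperF k b c (by omega) h (by omega)
  · subst h
    have hb3 : 3 ≤ b := by
      by_contra hcon
      have : b = 2 := by omega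
      rw [this] at hc
      omega
    have h2b : 2 * b ≤ k := by nlinarith
    have h1 : b * (2 * b) ∣ k.factorial := helperF k b (2*b) (by omega) (by omega) h2b
    have h2 : b * b ∣ b * (2 * b) := ⟨2, by ring⟩
    exact hc ▸ dvd_trans h2 h1
  · have : k + 1 = c * b := by rw [hc]; ring
    exact this ▸ helperF k c b (by omega) h (by omega)

lemma bad1 (n q : ℕ) (hq : q.Prime) (hqn : q ∣ n) (hn : n ≠ 0) :
    ¬ (q ^ (n.factorization q) ∣ (q-1).factorial * n.choose q) := by
  haveI : Fact q.Prime := ⟨hq⟩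
  have hq2 := hq.two_le
  have hqle : q ≤ n := Nat.le_of_dvd (by omega) hqn
  set k := q - 1 with hk
  have hkq : k + 1 = q := by omega
  set X := (q-1).factorial * n.choose q with hX
  set D := (n-1).descFactorial k with hD
  have hid : q * X = n * D := by
    rw [hX, hD, ← hkq]
    exact hId n k (by omega)
  have hX0 : X ≠ 0 := by
    have := Nat.choose_pos hqle
    have := (q-1).factorial_pos
    positivity
  have hD0 : D ≠ 0 := by
    rw [hD, Ne, Nat.descFactorial_eq_zero_iff_lt]; omega
  have hqD : ¬ q ∣ D := by
    rw [hD, Nat.descFactorial_eq_prod_range]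
    intro hdvd
    obtain ⟨i, hi, hdi⟩ := (Prime.dvd_finset_prod_iff hq.prime _).mp hdvd
    have hi' : i < k := Finset.mem_range.mp hi
    have h1 : n - 1 - i = n - (1 + i) := by omega
    rw [h1] at hdi
    have h2 : q ∣ n - (n - (1+i)) := Nat.dvd_sub hqn hdi
    rw [show n - (n - (1+i)) = 1 + i by omega] at h2
    have := Nat.le_of_dvd (by omega) h2
    omega
  have hveq : 1 + padicValNat q X = padicValNat q n + padicValNat q D := by
    have l : padicValNat q (q * X) = 1 + padicValNat q X := by
      rw [padicValNat.mul (by omega) hX0, padicValNat.self hq.one_lt]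
    have r : padicValNat q (n * D) = padicValNat q n + padicValNat q D :=
      padicValNat.mul hn hD0
    rw [← l, ← r, hid]
  have hvD : padicValNat q D = 0 := padicValNat.eq_zero_of_not_dvd hqD
  intro hcon
  have hle : n.factorization q ≤ padicValNat q X := (padicValNat_dvd_iff_le hX0).mp hcon
  rw [Nat.factorization_def n hq] at hle
  omega

lemma bad2 (n : ℕ) (hn : n ≠ 0) (h4 : 4 ∣ n) :
    ¬ (2 ^ (n.factorization 2) ∣ Nat.factorial 3 * n.choose 4) := by
  haveI : Fact (Nat.Prime 2) := ⟨Nat.prime_two⟩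
  have hn4 : 4 ≤ n := Nat.le_of_dvd (by omega) h4
  
  set X := Nat.factorial 3 * n.choose 4 with hX
  set D := (n-1).descFactorial 3 with hD
  have hid : 4 * X = n * D := hId n 3 (by omega)
  have hX0 : X ≠ 0 := by
    have := Nat.choose_pos hn4
    positivity
  have hD0 : D ≠ 0 := by
    rw [hD, Ne, Nat.descFactorial_eq_zero_iff_lt]; omega
  have hDexp : D = (n-3) * ((n-2) * (n-1)) := by
    rw [hD]
    show (n-1).descFactorial 3 = _
    rw [Nat.descFactorial_succ, Nat.descFactorial_succ, Nat.descFactorial_succ,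
      Nat.descFactorial_zero]
    rw [show n - 1 - 2 = n - 3 by omega, show n - 1 - 1 = n - 2 by omega, Nat.sub_zero]
    ring
  have hv3 : padicValNat 2 (n-3) = 0 := padicValNat.eq_zero_of_not_dvd (by omega)
  have hv1 : padicValNat 2 (n-1) = 0 := padicValNat.eq_zero_of_not_dvd (by omega)
  have hv2 : padicValNat 2 (n-2) = 1 := by
    have ha : 1 ≤ padicValNat 2 (n-2) :=
      one_le_padicValNat_of_dvd (by omega) (by omega)
    have hb : ¬ (2 ≤ padicValNat 2 (n-2)) := by
      intro h
      have : 2^2 ∣ n - 2 := (padicValNat_dvd_iff_le (by omega)).mpr h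
      omega
    omega
  have hvD : padicValNat 2 D = 1 := by
    rw [hDexp, padicValNat.mul (by omega) (Nat.mul_ne_zero (by omega) (by omega)),
      padicValNat.mul (by omega) (by omega), hv3, hv2, hv1]
  have hveq : 2 + padicValNat 2 X = padicValNat 2 n + 1 := by
    have l : padicValNat 2 (4 * X) = 2 + padicValNat 2 X := by
      rw [padicValNat.mul (by omega) hX0, show (4 : ℕ) = 2^2 by norm_num,
        padicValNat.prime_pow]
    have r : padicValNat 2 (n * D) = padicValNat 2 n + 1 := by
      rw [padicValNat.mul (by omega) hD0, hvD]
    rw [← l, ← r, hid]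
  intro hcon
  have hle : n.factorization 2 ≤ padicValNat 2 X := (padicValNat_dvd_iff_le hX0).mp hcon
  rw [Nat.factorization_def n Nat.prime_two] at hle
  omega

/-- **Theorem 1.** Suppose `k ≥ 0`, `n ≥ 1`, `α ∈ ℤ` with `α ^ n ≡ 1 (mod n)`.
Then `∑_{i=0}^{n-1} i^(k̲) · α^(i-k) ≡ 0 (mod n)` (where `i^(k̲)` is the falling
factorial, which vanishes for `i < k`, so each term is an integer) if and only if
(a) `k+1` is neither `4` nor a prime, or (b) `k+1 = 4` and `4 ∤ n`, or
(c) `k+1` is a prime `q`, and either `q ∤ n` or `α ≢ 1 (mod q)`. -/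
theorem sum_descFactorial_mul_pow_modEq_zero_iff
    (k n : ℕ) (hn : 1 ≤ n) (α : ℤ) (hα : α ^ n ≡ 1 [ZMOD (n : ℤ)]) :
    (∑ i ∈ Finset.range n, (i.descFactorial k : ℤ) * α ^ (i - k)) ≡ 0 [ZMOD (n : ℤ)] ↔
      (k + 1 ≠ 4 ∧ ¬ Nat.Prime (k + 1)) ∨
      (k + 1 = 4 ∧ ¬ (4 ∣ n)) ∨
      (Nat.Prime (k + 1) ∧ (¬ ((k + 1) ∣ n) ∨ ¬ (α ≡ 1 [ZMOD ((k : ℤ) + 1)]))) := by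
  have hn0 : n ≠ 0 := by omega
  rw [Int.modEq_zero_iff_dvd]
  have hdvd : (n : ℤ) ∣ α ^ n - 1 := (Int.ModEq.dvd hα.symm)
  have hmod1 : (α ≡ 1 [ZMOD ((k : ℤ) + 1)]) ↔ ((k + 1 : ℕ) : ℤ) ∣ α - 1 := by
    rw [Int.modEq_iff_dvd]
    push_cast
    exact dvd_sub_comm
  constructor
  · -- LHS → RHS, by contradiction
    intro hLHS
    by_contra hR
    push_neg at hR
    obtain ⟨hR1, hR2, hR3⟩ := hR
    rcases eq_or_ne (k + 1) 4 with h4 | h4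
    · -- k+1 = 4 and 4 ∣ n
      have hk3 : k = 3 := by omega
      subst hk3
      have h4n : 4 ∣ n := hR2 h4
      have h2n : 2 ∣ n := dvd_trans ⟨2, rfl⟩ h4n
      have hα2 : (2 : ℤ) ∣ α - 1 := by
        have h2 : (2 : ℤ) ∣ α ^ n - 1 := by
          refine dvd_trans ?_ hdvd
          exact_mod_cast Int.natCast_dvd_natCast.mpr h2n
        rcases Int.even_or_odd α with he | ho
        · exfalso
          obtain ⟨m, hm⟩ := he
          have hev : (2 : ℤ) ∣ α ^ n := by
            rw [show n = (n - 1) + 1 by omega, pow_succ]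
            exact Dvd.dvd.mul_left ⟨m, by omega⟩ _
          obtain ⟨d, hd⟩ := hev
          obtain ⟨c, hc⟩ := h2
          omega
        · obtain ⟨m, hm⟩ := ho
          exact ⟨m, by omega⟩
      set e := n.factorization 2 with he
      have hpe : 2 ^ e ∣ n := Nat.ordProj_dvd n 2
      have hLA := LA 2 e n 3 Nat.prime_two hpe α hα2
      have hpeS : (2 : ℤ) ^ e ∣ ∑ i ∈ Finset.range n, (i.descFactorial 3 : ℤ) * α ^ (i - 3) := by
        refine dvd_trans ?_ hLHS
        exact_mod_cast Int.natCast_dvd_natCast.mpr hpe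
      have hX : (2 : ℤ) ^ e ∣ ((Nat.factorial 3 * n.choose 4 : ℕ) : ℤ) := by
        have h := dvd_sub hpeS hLA
        simpa using h
      have hXn : 2 ^ e ∣ Nat.factorial 3 * n.choose 4 := by exact_mod_cast hX
      exact bad2 n hn0 h4n hXn
    · -- k+1 prime, (k+1) ∣ n, α ≡ 1
      have hq := hR1 h4
      obtain ⟨hqn, hmod⟩ := hR3 hq
      have hα1 : ((k + 1 : ℕ) : ℤ) ∣ α - 1 := hmod1.mp hmod
      set e := n.factorization (k + 1) with he
      have hpe : (k + 1) ^ e ∣ n := Nat.ordProj_dvd n (k + 1)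
      have hLA := LA (k + 1) e n k hq hpe α hα1
      have hpeS : ((k + 1 : ℕ) : ℤ) ^ e ∣ ∑ i ∈ Finset.range n, (i.descFactorial k : ℤ) * α ^ (i - k) := by
        refine dvd_trans ?_ hLHS
        exact_mod_cast Int.natCast_dvd_natCast.mpr hpe
      have hX : ((k + 1 : ℕ) : ℤ) ^ e ∣ ((k.factorial * n.choose (k + 1) : ℕ) : ℤ) := by
        have h := dvd_sub hpeS hLA
        simpa using h
      have hXn : (k + 1) ^ e ∣ k.factorial * n.choose (k + 1) := by exact_mod_cast hX
      have := bad1 n (k + 1) hq hqn hn0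
      rw [show k + 1 - 1 = k from rfl] at this
      exact this hXn
  · -- RHS → LHS
    intro hR
    rcases le_or_gt n k with hnk | hkn
    · have hz : (∑ i ∈ Finset.range n, (i.descFactorial k : ℤ) * α ^ (i - k)) = 0 := by
        apply Finset.sum_eq_zero
        intro i hi
        rw [Nat.descFactorial_of_lt (by have := Finset.mem_range.mp hi; omega)]
        simp
      rw [hz]
      exact dvd_zero _
    · rw [dvd_iff_forall_prime_pow n hn0]
      intro p hp
      have hpp : p.Prime := Nat.prime_of_mem_primeFactors hp
      have hpn : p ∣ n := Nat.dvd_of_mem_primeFactors hp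
      haveI : Fact p.Prime := ⟨hpp⟩
      set e := n.factorization p with he
      have hpe : p ^ e ∣ n := Nat.ordProj_dvd n p
      by_cases hpd : (p : ℤ) ∣ α - 1
      · have hLA := LA p e n k hpp hpe α hpd
        suffices hX : (p : ℤ) ^ e ∣ ((k.factorial * n.choose (k + 1) : ℕ) : ℤ) by
          have h := dvd_add hLA hX
          simpa using h
        suffices hXn : p ^ e ∣ k.factorial * n.choose (k + 1) by exact_mod_cast hXn
        apply LC p e n k hpp hkn hpe
        have hD0 : (n - 1).descFactorial k ≠ 0 := by
          rw [Ne, Nat.descFactorial_eq_zero_iff_lt]; omega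
        rcases hR with ⟨h4, hnp⟩ | ⟨h4, hn4⟩ | ⟨hq, hcase⟩
        · have h1 : (k + 1) ∣ (n - 1).descFactorial k :=
            dvd_trans (compdvd k h4 hnp) (Nat.factorial_dvd_descFactorial _ _)
          exact (padicValNat_dvd_iff_le hD0).mp (dvd_trans pow_padicValNat_dvd h1)
        · have hk3 : k = 3 := by omega
          subst hk3
          rcases eq_or_ne p 2 with rfl | hp2
          · have h2n : 2 ∣ n := hpn
            have h42 : 4 ∣ n - 2 := by omega
            have hDexp : (n - 1).descFactorial 3 = (n - 3) * ((n - 2) * (n - 1)) := by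
              rw [Nat.descFactorial_succ, Nat.descFactorial_succ, Nat.descFactorial_succ,
                Nat.descFactorial_zero]
              rw [show n - 1 - 2 = n - 3 by omega, show n - 1 - 1 = n - 2 by omega, Nat.sub_zero]
              ring
            have h4D : 2 ^ 2 ∣ (n - 1).descFactorial 3 := by
              rw [hDexp, show (2 : ℕ) ^ 2 = 4 by norm_num]
              exact dvd_trans h42 ⟨(n - 3) * (n - 1), by ring⟩
            have hv4 : padicValNat 2 (3 + 1) = 2 := by
              rw [show (3 + 1 : ℕ) = 2 ^ 2 by norm_num, padicValNat.prime_pow]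
            rw [hv4]
            exact (padicValNat_dvd_iff_le hD0).mp h4D
          · have hnd : ¬ p ∣ 3 + 1 := by
              intro hdvd
              have h1 : p ∣ 2 := hpp.dvd_of_dvd_pow (show p ∣ 2 ^ 2 by norm_num [hdvd])
              exact hp2 ((Nat.prime_dvd_prime_iff_eq hpp Nat.prime_two).mp h1)
            rw [padicValNat.eq_zero_of_not_dvd hnd]
            exact Nat.zero_le _
        · rcases eq_or_ne p (k + 1) with rfl | hpq
          · exfalso
            rcases hcase with hnd | hmd
            · exact hnd hpn
            · exact hmd (hmod1.mpr (by exact_mod_cast hpd))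
          · have hnd : ¬ p ∣ (k + 1) := fun hdvd =>
              hpq ((Nat.prime_dvd_prime_iff_eq hpp hq).mp hdvd)
            rw [padicValNat.eq_zero_of_not_dvd hnd]
            exact Nat.zero_le _
      · have hα' : (p : ℤ) ^ e ∣ α ^ n - 1 := by
          refine dvd_trans ?_ hdvd
          exact_mod_cast Int.natCast_dvd_natCast.mpr hpe
        exact LB p e n hpp hn0 hpe α hpd hα' k
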